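/- Under Assumptions 1 and 2 (each f_i is L_i-smooth, L = (1/m)Σ L_i, f = (1/m)Σ f_i is μ-strongly convex, r is proper, closed, convex), the PIAG iterates satisfy F_{k+1} ≤ F_k − (η/2)‖d_k‖² + (η² L/2) Σ_{j=(k−K)_+}^{k−1} ‖d_j‖² for any step size 0 < η ≤ 1/(L(K+1)), where F_k = F(x_k) − F(x*) and d_k = (x_{k+1}−x_k)/η. -/

import Mathlib

open RealInnerProductSpace

/-- Telescoping: `x k - x t = ∑_{j∈[t,k)} (x (j+1) - x j)`. -/
lemma piag_telesc {E : Type*} [AddCommGroup E] (x : ℕ → E) (t k : ℕ) (h : t ≤ k) :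
    x k - x t = ∑ j ∈ Finset.Ico t k, (x (j + 1) - x j) := by
  induction k, h using Nat.le_induction with
  | base => simp
  | succ k hk ih =>
    rw [Finset.sum_Ico_succ_top (by omega), ← ih]; abel

/-- Descent lemma: quadratic upper bound for a function with Lipschitz gradient. -/
lemma piag_descent_lemma {E : Type*} [NormedAddCommGroup E] [InnerProductSpace ℝ E]
    [CompleteSpace E] (φ : E → ℝ) (C : ℝ) (hC : 0 ≤ C) (hφ : Differentiable ℝ φ)
    (hlip : ∀ u v : E, ‖gradient φ u - gradient φ v‖ ≤ C * ‖u - v‖) (x y : E) :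
    φ y ≤ φ x + ⟪gradient φ x, y - x⟫ + C / 2 * ‖y - x‖ ^ 2 := by
  set v := y - x with hv
  have hgc : Continuous fun u => gradient φ u := by
    have : LipschitzWith ⟨C, hC⟩ fun u => gradient φ u := by
      apply LipschitzWith.of_dist_le_mul
      intro a b; have := hlip a b; rw [← dist_eq_norm, ← dist_eq_norm] at this; exact this
    exact this.continuous
  have hpath : ∀ t : ℝ, HasDerivAt (fun s : ℝ => x + s • v) v t := by
    intro t
    simpa using ((hasDerivAt_id t).smul_const v).const_add x
  have hψ : ∀ t : ℝ, HasDerivAt (fun s => φ (x + s • v)) ⟪gradient φ (x + t • v), v⟫ t := by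
    intro t
    have h1 : HasFDerivAt φ (InnerProductSpace.toDual ℝ E (gradient φ (x + t • v)))
        (x + t • v) := ((hφ (x + t • v)).hasGradientAt).hasFDerivAt
    have := h1.comp_hasDerivAt t (hpath t)
    simpa [InnerProductSpace.toDual_apply_apply, Function.comp_def] using this
  have hcont : Continuous fun t : ℝ => ⟪gradient φ (x + t • v), v⟫ := by
    exact (hgc.comp (by continuity)).inner continuous_const
  have hint : IntervalIntegrable (fun t : ℝ => ⟪gradient φ (x + t • v), v⟫)
      MeasureTheory.volume 0 1 := hcont.intervalIntegrable _ _
  have hFTC : ∫ t in (0:ℝ)..1, ⟪gradient φ (x + t • v), v⟫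
      = φ (x + (1:ℝ) • v) - φ (x + (0:ℝ) • v) :=
    intervalIntegral.integral_eq_sub_of_hasDerivAt (fun t _ => hψ t) hint
  have hxy : x + (1:ℝ) • v = y := by simp [hv]
  have hx0 : x + (0:ℝ) • v = x := by simp
  rw [hxy, hx0] at hFTC
  have hmono : ∫ t in (0:ℝ)..1, ⟪gradient φ (x + t • v), v⟫
      ≤ ∫ t in (0:ℝ)..1, (⟪gradient φ x, v⟫ + C * t * ‖v‖ ^ 2) := by
    apply intervalIntegral.integral_mono_on (by norm_num) hint
    · apply Continuous.intervalIntegrable; continuity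
    · intro t ht
      have h1 : ⟪gradient φ (x + t • v), v⟫ - ⟪gradient φ x, v⟫
          = ⟪gradient φ (x + t • v) - gradient φ x, v⟫ := by
        rw [inner_sub_left]
      have h2 : ⟪gradient φ (x + t • v) - gradient φ x, v⟫
          ≤ ‖gradient φ (x + t • v) - gradient φ x‖ * ‖v‖ := real_inner_le_norm _ _
      have h3 : ‖gradient φ (x + t • v) - gradient φ x‖ ≤ C * (t * ‖v‖) := by
        have := hlip (x + t • v) x
        simpa [norm_smul, abs_of_nonneg ht.1] using this
      have h4 : ‖gradient φ (x + t • v) - gradient φ x‖ * ‖v‖ ≤ C * (t * ‖v‖) * ‖v‖ :=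
        mul_le_mul_of_nonneg_right h3 (norm_nonneg _)
      nlinarith [norm_nonneg v]
  have hval : ∫ t in (0:ℝ)..1, (⟪gradient φ x, v⟫ + C * t * ‖v‖ ^ 2)
      = ⟪gradient φ x, v⟫ + C / 2 * ‖v‖ ^ 2 := by
    rw [intervalIntegral.integral_add (intervalIntegrable_const)
      (by apply Continuous.intervalIntegrable; continuity)]
    have : ∫ t in (0:ℝ)..1, C * t * ‖v‖ ^ 2 = C / 2 * ‖v‖ ^ 2 := by
      have : (fun t : ℝ => C * t * ‖v‖ ^ 2) = fun t : ℝ => (C * ‖v‖ ^ 2) * t := by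
        funext t; ring
      rw [this, intervalIntegral.integral_const_mul, integral_id]; ring
    rw [this]; simp
  linarith [hFTC, hmono.trans_eq hval]

/-- Three-point property of the prox step (strong convexity of the prox objective). -/
lemma piag_prox_three_point {E : Type*} [NormedAddCommGroup E] [InnerProductSpace ℝ E]
    (r : E → ℝ) (hr : ConvexOn ℝ Set.univ r) (η : ℝ) (hη : 0 < η) (y xp : E)
    (hmin : ∀ z : E, 1 / 2 * ‖xp - y‖ ^ 2 + η * r xp ≤ 1 / 2 * ‖z - y‖ ^ 2 + η * r z)
    (z : E) :
    1 / 2 * ‖xp - y‖ ^ 2 + η * r xp + 1 / 2 * ‖z - xp‖ ^ 2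
      ≤ 1 / 2 * ‖z - y‖ ^ 2 + η * r z := by
  have key : ∀ t : ℝ, 0 < t → t < 1 →
      1 / 2 * ‖xp - y‖ ^ 2 + η * r xp + (1 - t) / 2 * ‖z - xp‖ ^ 2
        ≤ 1 / 2 * ‖z - y‖ ^ 2 + η * r z := by
    intro t ht0 ht1
    have hz := hmin (xp + t • (z - xp))
    have hcomb : xp + t • (z - xp) = (1 - t) • xp + t • z := by module
    have hpt : xp + t • (z - xp) - y = (xp - y) + t • ((z - y) - (xp - y)) := by module
    have hba : z - xp = (z - y) - (xp - y) := by abel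
    have e1 : ‖(xp - y) + t • ((z - y) - (xp - y))‖ ^ 2
        = ‖xp - y‖ ^ 2 + 2 * (t * ⟪xp - y, (z - y) - (xp - y)⟫)
          + t ^ 2 * ‖(z - y) - (xp - y)‖ ^ 2 := by
      rw [norm_add_sq_real, real_inner_smul_right, norm_smul]
      rw [Real.norm_eq_abs, mul_pow, sq_abs]
    have e2 : ‖z - y‖ ^ 2 = ‖xp - y‖ ^ 2 + 2 * ⟪xp - y, (z - y) - (xp - y)⟫
        + ‖(z - y) - (xp - y)‖ ^ 2 := by
      have := norm_add_sq_real (xp - y) ((z - y) - (xp - y))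
      simpa using this
    have hconv := hr.2 (Set.mem_univ xp) (Set.mem_univ z)
      (by linarith : (0:ℝ) ≤ 1 - t) ht0.le (by ring)
    simp only [smul_eq_mul] at hconv
    have hcr : η * r (xp + t • (z - xp)) ≤ η * ((1 - t) * r xp + t * r z) := by
      rw [hcomb]; exact mul_le_mul_of_nonneg_left hconv hη.le
    rw [hpt] at hz
    have step : 1 / 2 * ‖xp - y‖ ^ 2 + η * r xp
        ≤ 1 / 2 * ‖(xp - y) + t • ((z - y) - (xp - y))‖ ^ 2
          + η * ((1 - t) * r xp + t * r z) := by linarith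
    rw [e1] at step
    rw [hba]
    have hmul : t * (1 / 2 * ‖xp - y‖ ^ 2 + η * r xp
        + (1 - t) / 2 * ‖(z - y) - (xp - y)‖ ^ 2)
        ≤ t * (1 / 2 * ‖z - y‖ ^ 2 + η * r z) := by nlinarith [step, e2, ht0.le]
    have := (mul_le_mul_iff_right₀ ht0).mp hmul
    linarith
  by_contra hcon
  push_neg at hcon
  set A := 1 / 2 * ‖xp - y‖ ^ 2 + η * r xp with hA
  set B := 1 / 2 * ‖z - y‖ ^ 2 + η * r z with hB
  set c := ‖z - xp‖ ^ 2 with hc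
  have hc0 : 0 ≤ c := by positivity
  have hD : 0 < A + c / 2 - B := by linarith
  have h2 := key (1/2) (by norm_num) (by norm_num)
  have hcpos : 0 < c := by nlinarith [h2]
  set t0 := (A + c / 2 - B) / c with ht0def
  have ht0pos : 0 < t0 := div_pos hD hcpos
  have hDle : A + c / 2 - B ≤ c / 4 := by nlinarith [h2]
  have ht0lt : t0 < 1 := by
    rw [ht0def, div_lt_one hcpos]; linarith
  have hk := key t0 ht0pos ht0lt
  rw [ht0def] at hk
  have heq : (1 - (A + c / 2 - B) / c) / 2 * c = c / 2 - (A + c / 2 - B) / 2 := by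
    field_simp
  have : A + (c / 2 - (A + c / 2 - B) / 2) ≤ B := by rw [← heq]; linarith [hk]
  linarith

/-- Scalar AM-GM helper. -/
lemma piag_amgm (L η a b : ℝ) (hL : 0 ≤ L) :
    L * η * b * a ≤ L / 2 * a ^ 2 + L * η ^ 2 / 2 * b ^ 2 := by
  nlinarith [mul_nonneg hL (sq_nonneg (a - η * b))]

set_option maxHeartbeats 1000000 in
/-- Lemma 1 (descent of suboptimality for PIAG): for `0 < η ≤ 1/(L(K+1))`,
`F_{k+1} ≤ F_k - (η/2)‖d_k‖² + (η²L/2) ∑_{j=(k-K)₊}^{k-1} ‖d_j‖²`. -/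
theorem stmt6
    {n m K : ℕ} (hm : 0 < m)
    (f : Fin m → EuclideanSpace ℝ (Fin n) → ℝ) (Li : Fin m → ℝ)
    (hLi : ∀ i, 0 ≤ Li i)
    (hdiff : ∀ i, Differentiable ℝ (f i))
    (hLip : ∀ i x y, ‖gradient (f i) x - gradient (f i) y‖ ≤ Li i * ‖x - y‖)
    (fs : EuclideanSpace ℝ (Fin n) → ℝ)
    (hfs : ∀ z, fs z = (m : ℝ)⁻¹ * ∑ i, f i z)
    (L : ℝ) (hL : L = (m : ℝ)⁻¹ * ∑ i, Li i) (hLpos : 0 < L)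
    (μ : ℝ) (hμ : 0 < μ)
    (hsc : ConvexOn ℝ Set.univ (fun z => fs z - μ / 2 * ‖z‖ ^ 2))
    (r : EuclideanSpace ℝ (Fin n) → ℝ)
    (hr : ConvexOn ℝ Set.univ r) (hrlsc : LowerSemicontinuous r)
    (η : ℝ) (hη : 0 < η)
    (x : ℕ → EuclideanSpace ℝ (Fin n))
    (τ : Fin m → ℕ → ℕ) (hτ : ∀ i k, k - K ≤ τ i k ∧ τ i k ≤ k)
    (g : ℕ → EuclideanSpace ℝ (Fin n))
    (hg : ∀ k, g k = (m : ℝ)⁻¹ • ∑ i, gradient (f i) (x (τ i k)))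
    (hiter : ∀ (k : ℕ) (z : EuclideanSpace ℝ (Fin n)),
      1 / 2 * ‖x (k + 1) - (x k - η • g k)‖ ^ 2 + η * r (x (k + 1))
        ≤ 1 / 2 * ‖z - (x k - η • g k)‖ ^ 2 + η * r z)
    (d : ℕ → EuclideanSpace ℝ (Fin n)) (hd : ∀ k, d k = η⁻¹ • (x (k + 1) - x k))
    (xs : EuclideanSpace ℝ (Fin n)) (hxs : ∀ z, fs xs + r xs ≤ fs z + r z)
    (Fk : ℕ → ℝ) (hFk : ∀ k, Fk k = fs (x k) + r (x k) - (fs xs + r xs))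
    (hηle : η ≤ 1 / (L * (K + 1)))
    (k : ℕ) :
    Fk (k + 1) ≤ Fk k - η / 2 * ‖d k‖ ^ 2
      + η ^ 2 * L / 2 * ∑ j ∈ Finset.Ico (k - K) k, ‖d j‖ ^ 2 := by
  classical
  set G : EuclideanSpace ℝ (Fin n) → EuclideanSpace ℝ (Fin n) :=
    fun z => (m : ℝ)⁻¹ • ∑ i, gradient (f i) z with hG
  have hfs_eq : fs = fun z => (m : ℝ)⁻¹ * ∑ i, f i z := funext hfs
  have hgrad : ∀ z, HasGradientAt fs (G z) z := by
    intro z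
    rw [hasGradientAt_iff_hasFDerivAt]
    have hsum : HasFDerivAt (fun w => ∑ i, f i w)
        (∑ i, (InnerProductSpace.toDual ℝ (EuclideanSpace ℝ (Fin n))) (gradient (f i) z)) z :=
      HasFDerivAt.fun_sum fun i _ => ((hdiff i z).hasGradientAt).hasFDerivAt
    have h2 := hsum.const_mul ((m : ℝ)⁻¹)
    have h3 : (InnerProductSpace.toDual ℝ (EuclideanSpace ℝ (Fin n))) (G z)
        = (m : ℝ)⁻¹ • ∑ i, (InnerProductSpace.toDual ℝ (EuclideanSpace ℝ (Fin n)))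
            (gradient (f i) z) := by
      simp [hG, map_smul, map_sum]
    rw [hfs_eq, h3]
    exact h2
  have hgradfs : ∀ z, gradient fs z = G z := fun z => (hgrad z).gradient
  have hfsdiff : Differentiable ℝ fs := fun z => (hgrad z).differentiableAt
  have hGlip : ∀ u v, ‖gradient fs u - gradient fs v‖ ≤ L * ‖u - v‖ := by
    intro u v
    rw [hgradfs, hgradfs]
    simp only [hG]
    rw [← smul_sub, ← Finset.sum_sub_distrib, norm_smul, Real.norm_eq_abs,
      abs_of_nonneg (by positivity)]
    have h1 : ‖∑ i, (gradient (f i) u - gradient (f i) v)‖ ≤ ∑ i, Li i * ‖u - v‖ :=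
      (norm_sum_le _ _).trans (Finset.sum_le_sum fun i _ => hLip i u v)
    calc (m : ℝ)⁻¹ * ‖∑ i, (gradient (f i) u - gradient (f i) v)‖
        ≤ (m : ℝ)⁻¹ * ∑ i, Li i * ‖u - v‖ :=
          mul_le_mul_of_nonneg_left h1 (by positivity)
      _ = L * ‖u - v‖ := by rw [hL, ← Finset.sum_mul]; ring
  -- the displacement
  set Δ := x (k + 1) - x k with hΔ
  have hΔd : η • d k = Δ := by
    rw [hd, hΔ, smul_smul, mul_inv_cancel₀ hη.ne', one_smul]
  have hnΔ : ‖Δ‖ = η * ‖d k‖ := by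
    rw [← hΔd, norm_smul, Real.norm_eq_abs, abs_of_pos hη]
  have hΔsq : ‖Δ‖ ^ 2 = η ^ 2 * ‖d k‖ ^ 2 := by rw [hnΔ]; ring
  -- descent lemma
  have hdesc := piag_descent_lemma fs L hLpos.le hfsdiff hGlip (x k) (x (k + 1))
  rw [hgradfs, ← hΔ] at hdesc
  -- three point inequality for the prox step
  have htp := piag_prox_three_point r hr η hη (x k - η • g k) (x (k + 1)) (hiter k) (x k)
  have he1 : x (k + 1) - (x k - η • g k) = Δ + η • g k := by rw [hΔ]; abel
  have he2 : x k - (x k - η • g k) = η • g k := by abel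
  have he3 : x k - x (k + 1) = -Δ := by rw [hΔ]; abel
  rw [he1, he2, he3, norm_neg] at htp
  have hAe : ‖Δ + η • g k‖ ^ 2 = ‖Δ‖ ^ 2 + 2 * (η * ⟪Δ, g k⟫) + η ^ 2 * ‖g k‖ ^ 2 := by
    rw [norm_add_sq_real, real_inner_smul_right, norm_smul, Real.norm_eq_abs, mul_pow, sq_abs]
  have hBe : ‖η • g k‖ ^ 2 = η ^ 2 * ‖g k‖ ^ 2 := by
    rw [norm_smul, Real.norm_eq_abs, mul_pow, sq_abs]
  rw [hAe, hBe] at htp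
  have hrstep : η * r (x (k + 1)) ≤ η * r (x k) - η * ⟪Δ, g k⟫ - ‖Δ‖ ^ 2 := by linarith
  have hrstep' : r (x (k + 1)) ≤ r (x k) - ⟪Δ, g k⟫ - η⁻¹ * ‖Δ‖ ^ 2 := by
    have hinv : η * (η⁻¹ * ‖Δ‖ ^ 2) = ‖Δ‖ ^ 2 := by
      rw [← mul_assoc, mul_inv_cancel₀ hη.ne', one_mul]
    have h2 : η * r (x (k + 1)) ≤ η * (r (x k) - ⟪Δ, g k⟫ - η⁻¹ * ‖Δ‖ ^ 2) := by
      rw [mul_sub, mul_sub, hinv]; linarith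
    exact (mul_le_mul_iff_right₀ hη).mp h2
  -- gradient error bound
  set S := ∑ j ∈ Finset.Ico (k - K) k, ‖d j‖ with hSdef
  set Q := ∑ j ∈ Finset.Ico (k - K) k, ‖d j‖ ^ 2 with hQdef
  have hstep : ∀ j, x (j + 1) - x j = η • d j := fun j => by
    rw [hd, smul_smul, mul_inv_cancel₀ hη.ne', one_smul]
  have hxd : ∀ t, k - K ≤ t → t ≤ k → ‖x k - x t‖ ≤ η * S := by
    intro t h1 h2
    rw [piag_telesc x t k h2]
    refine (norm_sum_le _ _).trans ?_
    calc ∑ j ∈ Finset.Ico t k, ‖x (j + 1) - x j‖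
        = ∑ j ∈ Finset.Ico t k, η * ‖d j‖ := by
          refine Finset.sum_congr rfl fun j _ => ?_
          rw [hstep j, norm_smul, Real.norm_eq_abs, abs_of_pos hη]
      _ ≤ ∑ j ∈ Finset.Ico (k - K) k, η * ‖d j‖ :=
          Finset.sum_le_sum_of_subset_of_nonneg
            (Finset.Ico_subset_Ico h1 le_rfl) (fun _ _ _ => by positivity)
      _ = η * S := by rw [hSdef, Finset.mul_sum]
  have herr : ‖G (x k) - g k‖ ≤ L * (η * S) := by
    rw [hg]
    simp only [hG]
    rw [← smul_sub, ← Finset.sum_sub_distrib, norm_smul, Real.norm_eq_abs,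
      abs_of_nonneg (by positivity)]
    have h1 : ‖∑ i, (gradient (f i) (x k) - gradient (f i) (x (τ i k)))‖
        ≤ ∑ i, Li i * (η * S) := by
      refine (norm_sum_le _ _).trans (Finset.sum_le_sum fun i _ => ?_)
      refine (hLip i _ _).trans ?_
      exact mul_le_mul_of_nonneg_left (hxd (τ i k) (hτ i k).1 (hτ i k).2) (hLi i)
    calc (m : ℝ)⁻¹ * ‖∑ i, (gradient (f i) (x k) - gradient (f i) (x (τ i k)))‖
        ≤ (m : ℝ)⁻¹ * ∑ i, Li i * (η * S) := mul_le_mul_of_nonneg_left h1 (by positivity)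
      _ = L * (η * S) := by rw [hL, ← Finset.sum_mul]; ring
  -- cross term bound
  have hcross : ⟪G (x k) - g k, Δ⟫ ≤ L * K / 2 * ‖Δ‖ ^ 2 + L * η ^ 2 / 2 * Q := by
    have h1 : ⟪G (x k) - g k, Δ⟫ ≤ (L * (η * S)) * ‖Δ‖ :=
      (real_inner_le_norm _ _).trans (mul_le_mul_of_nonneg_right herr (norm_nonneg _))
    have hrew : L * η * S * ‖Δ‖ = ∑ j ∈ Finset.Ico (k - K) k, L * η * ‖d j‖ * ‖Δ‖ := by
      rw [hSdef, Finset.mul_sum, Finset.sum_mul]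
    have h2 : L * η * S * ‖Δ‖
        ≤ ∑ j ∈ Finset.Ico (k - K) k, (L / 2 * ‖Δ‖ ^ 2 + L * η ^ 2 / 2 * ‖d j‖ ^ 2) := by
      rw [hrew]
      exact Finset.sum_le_sum fun j _ => piag_amgm L η ‖Δ‖ ‖d j‖ hLpos.le
    have h3 : ∑ j ∈ Finset.Ico (k - K) k, (L / 2 * ‖Δ‖ ^ 2 + L * η ^ 2 / 2 * ‖d j‖ ^ 2)
        = ((Finset.Ico (k - K) k).card : ℝ) * (L / 2 * ‖Δ‖ ^ 2) + L * η ^ 2 / 2 * Q := by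
      rw [Finset.sum_add_distrib, Finset.sum_const, nsmul_eq_mul, ← Finset.mul_sum, hQdef]
    have hcard : ((Finset.Ico (k - K) k).card : ℝ) ≤ (K : ℝ) := by
      rw [Nat.card_Ico]; exact_mod_cast (by omega : k - (k - K) ≤ K)
    calc ⟪G (x k) - g k, Δ⟫ ≤ (L * (η * S)) * ‖Δ‖ := h1
      _ = L * η * S * ‖Δ‖ := by ring
      _ ≤ ∑ j ∈ Finset.Ico (k - K) k, (L / 2 * ‖Δ‖ ^ 2 + L * η ^ 2 / 2 * ‖d j‖ ^ 2) := h2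
      _ = ((Finset.Ico (k - K) k).card : ℝ) * (L / 2 * ‖Δ‖ ^ 2) + L * η ^ 2 / 2 * Q := h3
      _ ≤ (K : ℝ) * (L / 2 * ‖Δ‖ ^ 2) + L * η ^ 2 / 2 * Q := by
          have := mul_le_mul_of_nonneg_right hcard (by positivity : (0:ℝ) ≤ L / 2 * ‖Δ‖ ^ 2)
          linarith
      _ = L * K / 2 * ‖Δ‖ ^ 2 + L * η ^ 2 / 2 * Q := by ring
  -- step size condition
  have hηL : η * (L * ((K : ℝ) + 1)) ≤ 1 := by
    have hpos : (0:ℝ) < L * ((K : ℝ) + 1) := by positivity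
    exact (le_div_iff₀ hpos).mp hηle
  have h1K : L * ((K : ℝ) + 1) ≤ η⁻¹ := by
    rw [← one_div, le_div_iff₀ hη]
    linarith [hηL]
  have hcoef : L * (K : ℝ) / 2 + L / 2 - η⁻¹ ≤ -(η⁻¹ / 2) := by linarith [h1K]
  have hcf : (L * (K : ℝ) / 2 + L / 2 - η⁻¹) * ‖Δ‖ ^ 2 ≤ -(η⁻¹ / 2) * ‖Δ‖ ^ 2 :=
    mul_le_mul_of_nonneg_right hcoef (sq_nonneg _)
  have hQη : -(η⁻¹ / 2) * ‖Δ‖ ^ 2 = -(η / 2 * ‖d k‖ ^ 2) := by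
    rw [hΔsq]
    field_simp
  have hinner : ⟪G (x k), Δ⟫ - ⟪Δ, g k⟫ = ⟪G (x k) - g k, Δ⟫ := by
    rw [inner_sub_left (𝕜 := ℝ) (G (x k)) (g k) Δ, real_inner_comm Δ (g k)]
  have hsum : fs (x (k + 1)) + r (x (k + 1))
      ≤ fs (x k) + r (x k) + ⟪G (x k) - g k, Δ⟫ + (L / 2 - η⁻¹) * ‖Δ‖ ^ 2 := by
    linarith [hdesc, hrstep', hinner]
  have hfinal : fs (x (k + 1)) + r (x (k + 1))
      ≤ fs (x k) + r (x k) - η / 2 * ‖d k‖ ^ 2 + η ^ 2 * L / 2 * Q := by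
    linarith [hsum, hcross, hcf, hQη]
  rw [hFk, hFk]
  linarith [hfinal]
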